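/- If σ is total, i.e. for all a, b ∈ H either σ a b or σ b a, then: (1) for every a ∈ H the set {x ∈ H : τ(σ) x a} is the least σ-ideal containing a, where τ(σ) is the transitive closure of σ (so H is σ-principal); and (2) the collection of all σ-ideals of H is totally ordered by inclusion. -/

import Mathlib

open Set

variable {α : Type*}

/-- Principal up-set `U(a,b) = {x : σ a x ∧ σ b x}`. -/
def ub (σ : α → α → Prop) (a b : α) : Set α := {x | σ a x ∧ σ b x}

/-- Principal down-set `L(a,b) = {x : σ x a ∧ σ x b}`. -/
def lb (σ : α → α → Prop) (a b : α) : Set α := {x | σ x a ∧ σ x b}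

/-- `K` is a σ-ideal: downward closed under `σ` and U-directed within `K`. -/
def SIdeal (σ : α → α → Prop) (K : Set α) : Prop :=
  (∀ ⦃x a : α⦄, a ∈ K → σ x a → x ∈ K) ∧
    ∀ ⦃a : α⦄, a ∈ K → ∀ ⦃b : α⦄, b ∈ K → (ub σ a b ∩ K).Nonempty

/-- `K` is the least σ-ideal containing `Y`. -/
def LeastSIdealOn (σ : α → α → Prop) (Y K : Set α) : Prop :=
  SIdeal σ K ∧ Y ⊆ K ∧ ∀ ⦃J : Set α⦄, SIdeal σ J → Y ⊆ J → K ⊆ J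


theorem total_relation_principal_and_chain (σ : α → α → Prop)
    (htot : ∀ a b : α, σ a b ∨ σ b a) :
    (∀ a : α, LeastSIdealOn σ {a} {x : α | Relation.TransGen σ x a}) ∧
    ∀ K₁ K₂ : Set α, SIdeal σ K₁ → SIdeal σ K₂ → K₁ ⊆ K₂ ∨ K₂ ⊆ K₁ := by
  have hrefl : ∀ a : α, σ a a := fun a => (htot a a).elim id id
  constructor
  · intro a
    refine ⟨⟨?_, ?_⟩, ?_, ?_⟩
    · intro x b hb hxb
      exact Relation.TransGen.head hxb hb
    · intro b hb c hc
      rcases htot b c with h | h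
      · exact ⟨c, ⟨h, hrefl c⟩, hc⟩
      · exact ⟨b, ⟨hrefl b, h⟩, hb⟩
    · intro x hx
      simp only [Set.mem_singleton_iff] at hx
      subst hx
      exact Relation.TransGen.single (hrefl x)
    · intro J hJ haJ x hx
      have ha : a ∈ J := haJ rfl
      induction hx using Relation.TransGen.head_induction_on with
      | single h => exact hJ.1 ha h
      | head h _ ih => exact hJ.1 ih h
  · intro K₁ K₂ h₁ h₂
    by_cases hsub : K₁ ⊆ K₂
    · exact Or.inl hsub
    · right
      obtain ⟨b, hb1, hb2⟩ := Set.not_subset.mp hsub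
      intro c hc
      rcases htot b c with h | h
      · exact absurd (h₂.1 hc h) hb2
      · exact h₁.1 hb1 h
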